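/- (Dense coding forces maximal entanglement) Let ω₁ be a positive semidefinite operator on ℂ^d with tr(ω₁) = 1, and let U_x, x = 1,…,d², be unitaries on ℂ^d such that tr(ω₁ U_x* U_y) = δ_{xy}. Then ω₁ is invertible and ω₁ = (1/d)·I. -/

import Mathlib

open Finset Matrix ComplexOrder

/-- Dense coding forces maximal entanglement: if ω₁ is a density matrix on ℂ^d and
    U_1,…,U_{d²} are unitaries with tr(ω₁ U_x* U_y) = δ_{xy}, then ω₁ is invertible
    and ω₁ = (1/d)·I. -/
theorem stmt15 {d : ℕ} (hd : 0 < d)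
    (ω : Matrix (Fin d) (Fin d) ℂ) (hω : ω.PosSemidef) (htr : ω.trace = 1)
    (U : Fin (d ^ 2) → Matrix (Fin d) (Fin d) ℂ)
    (hU : ∀ x, U x ∈ Matrix.unitaryGroup (Fin d) ℂ)
    (horth : ∀ x y, (ω * (U x)ᴴ * U y).trace = if x = y then (1 : ℂ) else 0) :
    IsUnit ω ∧ ω = ((d : ℂ))⁻¹ • 1 := by
  have hdC : (d : ℂ) ≠ 0 := Nat.cast_ne_zero.mpr hd.ne'
  obtain ⟨s, hsH, hss⟩ : ∃ s : Matrix (Fin d) (Fin d) ℂ, s.IsHermitian ∧ s * s = ω := by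
    open scoped MatrixOrder in
    exact ⟨CFC.sqrt ω, (CFC.sqrt_nonneg ω).posSemidef.1, CFC.sqrt_mul_sqrt_self ω hω.nonneg⟩
  set V : Fin (d ^ 2) → Matrix (Fin d) (Fin d) ℂ := fun x => U x * s with hV
  -- orthonormality of the V's in the Frobenius inner product
  have hVorth : ∀ x y, ∑ p : Fin d × Fin d, star (V x p.1 p.2) * V y p.1 p.2
      = if x = y then (1 : ℂ) else 0 := by
    intro x y
    have h1 : (V x)ᴴ * V y = s * ((U x)ᴴ * (U y * s)) := by
      simp [hV, Matrix.conjTranspose_mul, hsH.eq, Matrix.mul_assoc]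
    have h2 : ((V x)ᴴ * V y).trace = (ω * (U x)ᴴ * U y).trace := by
      rw [h1, Matrix.trace_mul_comm, ← Matrix.mul_assoc,
        Matrix.mul_assoc ((U x)ᴴ * U y), hss, Matrix.trace_mul_comm, ← Matrix.mul_assoc]
    rw [← horth x y, ← h2]
    rw [Matrix.trace]
    simp only [Matrix.diag_apply, Matrix.mul_apply, Matrix.conjTranspose_apply]
    rw [Finset.sum_comm, ← Fintype.sum_prod_type']
  -- build a square matrix from the V's
  have hcard : d * d = d ^ 2 := (sq d).symm
  let e : Fin d × Fin d ≃ Fin (d ^ 2) := finProdFinEquiv.trans (finCongr hcard)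
  set N : Matrix (Fin (d ^ 2)) (Fin (d ^ 2)) ℂ :=
    fun x q => star (V x (e.symm q).1 (e.symm q).2) with hN
  have hNN : N * Nᴴ = 1 := by
    ext x y
    rw [Matrix.mul_apply, Matrix.one_apply]
    have := hVorth x y
    calc ∑ q, N x q * Nᴴ q y
        = ∑ q, star (V x (e.symm q).1 (e.symm q).2) * V y (e.symm q).1 (e.symm q).2 := by
          apply Finset.sum_congr rfl
          intro q _
          rw [Matrix.conjTranspose_apply]
          simp [hN, Matrix.conjTranspose_apply]
      _ = ∑ p : Fin d × Fin d, star (V x p.1 p.2) * V y p.1 p.2 :=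
          Equiv.sum_comp e.symm fun p => star (V x p.1 p.2) * V y p.1 p.2
      _ = if x = y then 1 else 0 := hVorth x y
  have hNN' : Nᴴ * N = 1 := mul_eq_one_comm.mp hNN
  -- completeness relation
  have hcomp : ∀ p q : Fin d × Fin d,
      ∑ x, V x p.1 p.2 * star (V x q.1 q.2) = if p = q then (1 : ℂ) else 0 := by
    intro p q
    have := congrFun (congrFun hNN' (e p)) (e q)
    rw [Matrix.mul_apply, Matrix.one_apply] at this
    simp only [Matrix.conjTranspose_apply] at this
    simp only [hN, Matrix.conjTranspose_apply, Equiv.symm_apply_apply, star_star] at this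
    rw [this]
    simp [EmbeddingLike.apply_eq_iff_eq]
  -- contract: for all j l, (d:ℂ)^2 * ω l j = if j = l then d else 0
  have hkey : ∀ j l : Fin d, (d : ℂ) ^ 2 * ω l j = if j = l then (d : ℂ) else 0 := by
    intro j l
    have h3 : ∀ x, ((V x)ᴴ * V x) = ω := by
      intro x
      have hu : (U x)ᴴ * U x = 1 := by
        have := (hU x).1
        rwa [Matrix.star_eq_conjTranspose] at this
      calc (V x)ᴴ * V x = s * ((U x)ᴴ * U x) * s := by
            simp [hV, Matrix.conjTranspose_mul, hsH.eq, Matrix.mul_assoc]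
        _ = ω := by rw [hu, Matrix.mul_one, hss]
    have h4 : ∑ i : Fin d, ∑ x, V x i j * star (V x i l)
        = if j = l then (d : ℂ) else 0 := by
      rw [Finset.sum_congr rfl (fun i _ => hcomp (i, j) (i, l))]
      by_cases hjl : j = l <;> simp [hjl, Prod.ext_iff]
    calc (d : ℂ) ^ 2 * ω l j = ∑ x : Fin (d ^ 2), ω l j := by
          simp [mul_comm]
      _ = ∑ x, ((V x)ᴴ * V x) l j := by
          exact Finset.sum_congr rfl fun x _ => by rw [h3 x]
      _ = ∑ x, ∑ i, star (V x i l) * V x i j := by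
          simp [Matrix.mul_apply, Matrix.conjTranspose_apply]
      _ = ∑ i, ∑ x, V x i j * star (V x i l) := by
          rw [Finset.sum_comm]
          simp [mul_comm]
      _ = if j = l then (d : ℂ) else 0 := h4
  have hωeq : ω = ((d : ℂ))⁻¹ • 1 := by
    ext l j
    have := hkey j l
    have hd2 : ((d : ℂ) ^ 2) ≠ 0 := pow_ne_zero _ hdC
    have : ω l j = ((d : ℂ) ^ 2)⁻¹ * (if j = l then (d : ℂ) else 0) := by
      field_simp at this ⊢
      linear_combination this
    rw [this]
    by_cases hjl : j = l
    · simp [hjl, Matrix.one_apply, pow_two, hdC]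
    · simp [hjl, Matrix.one_apply, Ne.symm hjl]
  refine ⟨?_, hωeq⟩
  rw [hωeq]
  refine isUnit_iff_exists.mpr ⟨(d : ℂ) • 1, ?_, ?_⟩
  · rw [smul_mul_smul_comm, Matrix.one_mul, inv_mul_cancel₀ hdC, one_smul]
  · rw [smul_mul_smul_comm, Matrix.one_mul, mul_inv_cancel₀ hdC, one_smul]
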